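/- Let Θ be a nonempty index set and (κ_θ)_{θ∈Θ} a family of Markov kernels on ℝ^d with nonlinear Markov operator P̄f(x) = sup_{θ∈Θ} ∫ f dκ_θ(x,·); assume x ↦ P̄f(x) is Borel measurable for every bounded Borel measurable f ≥ 0. Let Φ : [0,∞) → [0,∞) be increasing with lim_{r→∞} Φ(r) = ∞, Ψ : ℝ^d × ℝ^d → [0,∞) a function, and assume the Harnack-type inequality Φ(P̄f(x)) ≤ P̄(Φ∘f)(y)·e^{Ψ(x,y)} for all bounded Borel measurable f ≥ 0 and all x, y ∈ ℝ^d. Let μ₀ be an invariant linear expectation of P̄. If A ⊆ ℝ^d is Borel and P̄1_A(x₀) = 0 for some x₀ ∈ ℝ^d, then P̄1_A ≡ 0 and μ₀(A) = 0. -/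

import Mathlib

open MeasureTheory ProbabilityTheory Filter

/-- The nonlinear Markov operator `P̄ f x = ⨆ θ, ∫ f dκ_θ(x,·)` associated with a family
of Markov kernels on `ℝ^d`. -/
noncomputable def nlOp {d : ℕ} {Θ : Type*}
    (κ : Θ → Kernel (EuclideanSpace ℝ (Fin d)) (EuclideanSpace ℝ (Fin d)))
    (f : EuclideanSpace ℝ (Fin d) → ℝ) (x : EuclideanSpace ℝ (Fin d)) : ℝ :=
  ⨆ θ, ∫ y, f y ∂(κ θ x)

theorem stmt_4 {d : ℕ} {Θ : Type*} [Nonempty Θ]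
    (κ : Θ → Kernel (EuclideanSpace ℝ (Fin d)) (EuclideanSpace ℝ (Fin d)))
    (hκ : ∀ θ, IsMarkovKernel (κ θ))
    (hPmeas : ∀ f : EuclideanSpace ℝ (Fin d) → ℝ, Measurable f → (∀ y, 0 ≤ f y) →
      (∃ C, ∀ y, f y ≤ C) → Measurable (nlOp κ f))
    (Φ : ℝ → ℝ)
    (hΦmono : MonotoneOn Φ (Set.Ici 0))
    (hΦnonneg : ∀ r ∈ Set.Ici (0:ℝ), 0 ≤ Φ r)
    (hΦtop : Tendsto Φ atTop atTop)
    (Ψ : EuclideanSpace ℝ (Fin d) → EuclideanSpace ℝ (Fin d) → ℝ)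
    (hΨnonneg : ∀ x y, 0 ≤ Ψ x y)
    (hHarnack : ∀ f : EuclideanSpace ℝ (Fin d) → ℝ, Measurable f → (∀ y, 0 ≤ f y) →
      (∃ C, ∀ y, f y ≤ C) → ∀ x y,
      Φ (nlOp κ f x) ≤ nlOp κ (fun z => Φ (f z)) y * Real.exp (Ψ x y))
    -- μ₀ is an invariant linear expectation of P̄
    (μ₀ : Measure (EuclideanSpace ℝ (Fin d))) [IsProbabilityMeasure μ₀]
    (hinv : ∀ f : EuclideanSpace ℝ (Fin d) → ℝ, Measurable f → (∀ y, 0 ≤ f y) →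
      (∃ C, ∀ y, f y ≤ C) → ∫ x, nlOp κ f x ∂μ₀ = ∫ x, f x ∂μ₀)
    (A : Set (EuclideanSpace ℝ (Fin d))) (hA : MeasurableSet A)
    (x₀ : EuclideanSpace ℝ (Fin d))
    (hx₀ : nlOp κ (A.indicator fun _ => (1:ℝ)) x₀ = 0) :
    (∀ x, nlOp κ (A.indicator fun _ => (1:ℝ)) x = 0) ∧ μ₀ A = 0 := by

  classical
  -- indicator facts
  have hmeas : ∀ b : ℝ, Measurable (A.indicator fun _ => b) := fun b =>
    measurable_const.indicator hA
  have hnn : ∀ b : ℝ, 0 ≤ b → ∀ y, 0 ≤ (A.indicator fun _ => b) y := by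
    intro b hb y
    exact Set.indicator_nonneg (fun _ _ => hb) y
  have hbd : ∀ b : ℝ, 0 ≤ b → ∀ y, (A.indicator fun _ => b) y ≤ b := by
    intro b hb y
    by_cases hy : y ∈ A <;> simp [Set.indicator_apply, hy, hb]
  -- nlOp of scaled indicator
  have haux : ∀ (x : EuclideanSpace ℝ (Fin d)) (b : ℝ),
      nlOp κ (A.indicator fun _ => b) x = ⨆ θ, ((κ θ x) A).toReal * b := by
    intro x b
    unfold nlOp
    congr 1
    funext θ
    rw [integral_indicator_const b hA, smul_eq_mul]
    rfl
  have hbdd : ∀ x, BddAbove (Set.range fun θ => ((κ θ x) A).toReal) := by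
    intro x
    refine ⟨1, ?_⟩
    rintro _ ⟨θ, rfl⟩
    haveI := hκ θ
    calc ((κ θ x) A).toReal ≤ ((κ θ x) Set.univ).toReal :=
          ENNReal.toReal_mono (measure_ne_top _ _) (measure_mono (Set.subset_univ _))
      _ = 1 := by simp
  -- from hx₀, each kernel at x₀ vanishes on A
  have hx₀' : ∀ θ, (κ θ x₀) A = 0 := by
    intro θ
    have h0 : (⨆ θ, ((κ θ x₀) A).toReal) = 0 := by
      have := hx₀
      rw [haux x₀ 1] at this
      simpa using this
    have hle : ((κ θ x₀) A).toReal ≤ 0 := by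
      rw [← h0]
      exact le_ciSup (hbdd x₀) θ
    have : ((κ θ x₀) A).toReal = 0 := le_antisymm hle ENNReal.toReal_nonneg
    exact (ENNReal.toReal_eq_zero_iff _).mp this |>.resolve_right (measure_ne_top _ _)
  -- key claim: the sup vanishes at every point
  have key : ∀ x, (⨆ θ, ((κ θ x) A).toReal) = 0 := by
    intro x
    set t := ⨆ θ, ((κ θ x) A).toReal with ht
    have ht0 : 0 ≤ t := Real.iSup_nonneg fun θ => ENNReal.toReal_nonneg
    by_contra hne
    have tpos : 0 < t := lt_of_le_of_ne ht0 (Ne.symm hne)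
    -- bound: for all n, Φ (t * n) ≤ Φ 0 * exp (Ψ x x₀)
    have hbound : ∀ n : ℕ, Φ (t * n) ≤ Φ 0 * Real.exp (Ψ x x₀) := by
      intro n
      have hnn' := hnn (n : ℝ) (Nat.cast_nonneg n)
      have h := hHarnack (A.indicator fun _ => (n : ℝ)) (hmeas _) hnn'
        ⟨n, hbd _ (Nat.cast_nonneg n)⟩ x x₀
      have h1 : nlOp κ (A.indicator fun _ => (n : ℝ)) x = t * n := by
        rw [haux x n, ht]
        exact (Real.iSup_mul_of_nonneg (Nat.cast_nonneg n) _).symm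
      have h2 : nlOp κ (fun z => Φ ((A.indicator fun _ => (n : ℝ)) z)) x₀ = Φ 0 := by
        unfold nlOp
        have : ∀ θ, ∫ y, Φ ((A.indicator fun _ => (n : ℝ)) y) ∂(κ θ x₀) = Φ 0 := by
          intro θ
          haveI := hκ θ
          have hae : (fun y => Φ ((A.indicator fun _ => (n : ℝ)) y))
              =ᵐ[(κ θ x₀)] fun _ => Φ 0 := by
            filter_upwards [(measure_eq_zero_iff_ae_notMem).mp (hx₀' θ)] with y hy
            simp [Set.indicator_apply, hy]
          rw [integral_congr_ae hae]
          simp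
        simp only [this]
        exact ciSup_const
      rw [h1] at h
      rw [h2] at h
      exact h
    -- but Φ (t * n) → ∞
    have htend : Tendsto (fun n : ℕ => Φ (t * n)) atTop atTop :=
      hΦtop.comp ((tendsto_natCast_atTop_atTop).const_mul_atTop tpos)
    obtain ⟨n, hn⟩ := (htend.eventually (eventually_gt_atTop (Φ 0 * Real.exp (Ψ x x₀)))).exists
    exact absurd (hbound n) (not_le.mpr hn)
  have hP0 : ∀ x, nlOp κ (A.indicator fun _ => (1:ℝ)) x = 0 := by
    intro x
    rw [haux x 1]
    simpa using key x
  refine ⟨hP0, ?_⟩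
  have := hinv (A.indicator fun _ => (1:ℝ)) (hmeas 1) (hnn 1 zero_le_one)
    ⟨1, hbd 1 zero_le_one⟩
  rw [show (∫ x, nlOp κ (A.indicator fun _ => (1:ℝ)) x ∂μ₀) = 0 by
      simp [funext hP0]] at this
  rw [integral_indicator_const (1:ℝ) hA, smul_eq_mul, mul_one] at this
  have h0 : (μ₀ A).toReal = 0 := this.symm
  exact ((ENNReal.toReal_eq_zero_iff _).mp h0).resolve_right (measure_ne_top _ _)
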